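/- Suppose the one-step solution operator satisfies ‖S(ž, f)‖ ≤ ‖ž‖ + τ‖f‖ and the update is z_m^n = S(α z_{m−1}^{n−1} + (1−α) z_m^{n−1}, f_m^n) with α ∈ [0,1]. Then for all n, max_{0≤m≤M} ‖z_m^n‖ ≤ max(max_{0≤m≤M} ‖z_m^0‖, max_{n'≤n} ‖z_0^{n'}‖) + n·τ·max_{m,n'≤n} ‖f_m^{n'}‖. -/

import Mathlib

open Finset

/-- Stability of the full scheme: if the one-step solution operator satisfies
`‖S(ž,f)‖ ≤ ‖ž‖ + τ‖f‖` and `z_m^n = S(α_m^n z_{m-1}^{n-1} + (1-α_m^n) z_m^{n-1}, f_m^n)`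
with `α_m^n ∈ [0,1]`, then
`max_{0≤m≤M} ‖z_m^n‖ ≤ max(max_m ‖z_m^0‖, max_{n'≤n} ‖z_0^{n'}‖) + n·τ·max_{m,n'≤n} ‖f_m^{n'}‖`. -/
theorem scheme_stability
    {X : Type*} [NormedAddCommGroup X] [NormedSpace ℝ X]
    (M : ℕ) (τ : ℝ) (hτ : 0 ≤ τ)
    (S : X → X → X) (hS : ∀ zcheck f, ‖S zcheck f‖ ≤ ‖zcheck‖ + τ * ‖f‖)
    (α : ℕ → ℕ → ℝ) (hα : ∀ m n, α m n ∈ Set.Icc (0 : ℝ) 1)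
    (f : ℕ → ℕ → X) (z : ℕ → ℕ → X)
    (hrec : ∀ m, 1 ≤ m → m ≤ M → ∀ n, 1 ≤ n →
      z m n = S (α m n • z (m - 1) (n - 1) + (1 - α m n) • z m (n - 1)) (f m n)) :
    ∀ n, ∀ m ≤ M,
      ‖z m n‖ ≤
        max ((range (M + 1)).sup' nonempty_range_add_one (fun m' => ‖z m' 0‖))
            ((range (n + 1)).sup' nonempty_range_add_one (fun n' => ‖z 0 n'‖))
        + n * τ *
          ((range (M + 1) ×ˢ range (n + 1)).sup'
            (nonempty_range_add_one.product nonempty_range_add_one)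
            (fun p => ‖f p.1 p.2‖)) := by
  
  intro n
  induction n with
  | zero =>
    intro m hm
    have h1 : ‖z m 0‖ ≤ (range (M+1)).sup' nonempty_range_add_one (fun m' => ‖z m' 0‖) :=
      Finset.le_sup' (fun m' => ‖z m' 0‖) (mem_range.mpr (Nat.lt_succ_of_le hm))
    simpa using h1.trans (le_max_left _ _)
  | succ n ih =>
    set A := (range (M + 1)).sup' nonempty_range_add_one (fun m' => ‖z m' 0‖) with hA
    set B : ℕ → ℝ := fun k => (range (k + 1)).sup' nonempty_range_add_one (fun n' => ‖z 0 n'‖)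
      with hBdef
    set F : ℕ → ℝ := fun k => (range (M + 1) ×ˢ range (k + 1)).sup'
      (nonempty_range_add_one.product nonempty_range_add_one) (fun p => ‖f p.1 p.2‖) with hFdef
    have hBmono : B n ≤ B (n+1) := by
      apply Finset.sup'_le
      intro b hb
      simp only [hBdef]
      exact Finset.le_sup' (fun n' => ‖z 0 n'‖) (mem_range.mpr (by simp at hb; omega))
    have hFmono : F n ≤ F (n+1) := by
      apply Finset.sup'_le
      intro p hp
      simp only [hFdef]
      apply Finset.le_sup' (fun p : ℕ × ℕ => ‖f p.1 p.2‖)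
      simp only [Finset.mem_product, mem_range] at hp ⊢
      omega
    have hF0 : (0:ℝ) ≤ F (n+1) := by
      refine le_trans (norm_nonneg (f 0 0)) ?_
      simp only [hFdef]
      exact Finset.le_sup' (fun p : ℕ × ℕ => ‖f p.1 p.2‖)
        (by simp [Finset.mem_product] : ((0,0) : ℕ × ℕ) ∈ range (M+1) ×ˢ range (n+1+1))
    intro m hm
    rcases Nat.eq_zero_or_pos m with rfl | hm1
    · have h1 : ‖z 0 (n+1)‖ ≤ B (n+1) := by
        simp only [hBdef]
        exact Finset.le_sup' (fun n' => ‖z 0 n'‖) (mem_range.mpr (by omega))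
      have : (0:ℝ) ≤ ((n:ℝ)+1) * τ * F (n+1) := by positivity
      push_cast
      nlinarith [le_max_right A (B (n+1))]
    · have hrec' := hrec m hm1 hm (n+1) (by omega)
      simp only [Nat.add_sub_cancel] at hrec'
      rw [hrec']
      have hα' := hα m (n+1)
      obtain ⟨ha0, ha1⟩ := hα'
      have hconv : ‖α m (n+1) • z (m-1) n + (1 - α m (n+1)) • z m n‖ ≤
          α m (n+1) * ‖z (m-1) n‖ + (1 - α m (n+1)) * ‖z m n‖ := by
        refine (norm_add_le _ _).trans ?_
        rw [norm_smul, norm_smul, Real.norm_of_nonneg ha0,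
          Real.norm_of_nonneg (by linarith)]
      have C := max A (B n) + n * τ * F n
      have ih1 : ‖z (m-1) n‖ ≤ max A (B n) + n * τ * F n := ih (m-1) (by omega)
      have ih2 : ‖z m n‖ ≤ max A (B n) + n * τ * F n := ih m hm
      have hf : ‖f m (n+1)‖ ≤ F (n+1) := by
        simp only [hFdef]
        exact Finset.le_sup' (fun p : ℕ × ℕ => ‖f p.1 p.2‖)
          (by simp only [Finset.mem_product, mem_range]; omega :
            ((m, n+1) : ℕ × ℕ) ∈ range (M+1) ×ˢ range (n+1+1))
      have step1 : ‖S (α m (n+1) • z (m-1) n + (1 - α m (n+1)) • z m n) (f m (n+1))‖ ≤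
          (max A (B n) + n * τ * F n) + τ * ‖f m (n+1)‖ := by
        refine (hS _ _).trans ?_
        have : ‖α m (n+1) • z (m-1) n + (1 - α m (n+1)) • z m n‖ ≤
            max A (B n) + n * τ * F n := by
          refine hconv.trans ?_
          nlinarith
        linarith
      have hmax : max A (B n) ≤ max A (B (n+1)) := max_le_max le_rfl hBmono
      have hnτF : (n:ℝ) * τ * F n ≤ (n:ℝ) * τ * F (n+1) := by
        have : (0:ℝ) ≤ (n:ℝ) * τ := by positivity
        nlinarith
      have hτf : τ * ‖f m (n+1)‖ ≤ τ * F (n+1) := by nlinarith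
      push_cast
      nlinarith [step1]
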